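/- In the oblivious model, for every m, k ∈ {1,2} and every t ∈ ℕ, E[h_{mk}(t+1)] ≤ 1 + (1 − b_k) · ∑_{j=0}^{t} (1 − b_k r_k)^j + ∑_{n∈{1,2}} b_k^{(n)} (1 − r_k) · ∑_{j=0}^{t} (1 − r_k ζ_{nk})^j. -/

import Mathlib

/-- Index type for the family of primitive random variables:
`inl (m, k, t)` indexes the request variable of user `m`, CP `k`, time `t`;
`inr (n, k, t)` indexes the command indicator of eRRH `n`, CP `k`, time `t`. -/
abbrev FranIdx : Type := (Fin 2 × Fin 2 × ℕ) ⊕ (Fin 2 × Fin 2 × ℕ)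

/-- Codomain of each primitive random variable. -/
def FranType : FranIdx → Type
  | .inl _ => Fin 3
  | .inr _ => Bool

instance FranType.instMeasurableSpace : ∀ i, MeasurableSpace (FranType i)
  | .inl _ => inferInstanceAs (MeasurableSpace (Fin 3))
  | .inr _ => inferInstanceAs (MeasurableSpace Bool)

/-- Oblivious 2-user/2-eRRH/2-CP F-RAN model. -/
structure ObliviousFRAN where
  /-- sample space -/
  Ω : Type
  [mΩ : MeasurableSpace Ω]
  μ : MeasureTheory.Measure Ω
  isProb : MeasureTheory.IsProbabilityMeasure μ
  /-- request rates: `bsplit k n = b_k^{(n+1)}` -/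
  bsplit : Fin 2 → Fin 2 → ℝ
  bsplit_nonneg : ∀ k n, 0 ≤ bsplit k n
  bsum_le_one : ∀ k, bsplit k 0 + bsplit k 1 ≤ 1
  /-- command rates -/
  r : Fin 2 → ℝ
  r_nonneg : ∀ k, 0 ≤ r k
  r_le_one : ∀ k, r k ≤ 1
  /-- request variables: value `0` = no request, value `n.succ` = request sent to eRRH `n` -/
  R : Fin 2 → Fin 2 → ℕ → Ω → Fin 3
  /-- command indicators -/
  γ : Fin 2 → Fin 2 → ℕ → Ω → Bool
  R_meas : ∀ m k t, Measurable (R m k t)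
  γ_meas : ∀ n k t, Measurable (γ n k t)
  R_law : ∀ m k t (n : Fin 2), μ {ω | R m k t ω = n.succ} = ENNReal.ofReal (bsplit k n)
  R_law0 : ∀ m k t, μ {ω | R m k t ω = 0} = ENNReal.ofReal (1 - (bsplit k 0 + bsplit k 1))
  γ_law : ∀ n k t, μ {ω | γ n k t ω = true} = ENNReal.ofReal (r k)
  /-- all the primitive random variables are mutually independent -/
  indep : ProbabilityTheory.iIndepFun (m := fun i => FranType.instMeasurableSpace i)
      (fun i => Sum.rec (motive := fun j => Ω → FranType j)
        (fun p => R p.1 p.2.1 p.2.2) (fun p => γ p.1 p.2.1 p.2.2) i) μ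

attribute [instance] ObliviousFRAN.mΩ

open MeasureTheory ProbabilityTheory Filter

namespace ObliviousFRAN

variable (M : ObliviousFRAN)

/-- AoI of CP `k` at eRRH `n`. -/
def g (n k : Fin 2) : ℕ → M.Ω → ℕ
  | 0 => fun _ => 1
  | t + 1 => fun ω =>
      if M.γ n k t ω = true ∧ ∃ m : Fin 2, M.R m k t ω = n.succ then 1
      else g n k t ω + 1

/-- AoI of CP `k` at user `m`. -/
def h (m k : Fin 2) : ℕ → M.Ω → ℕ
  | 0 => fun _ => 1
  | t + 1 => fun ω =>
      if M.R m k t ω = 0 then h m k t ω + 1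
      else if M.R m k t ω = 1 then
        (if M.γ 0 k t ω = true then 1 else min (h m k t ω) (M.g 0 k t ω) + 1)
      else
        (if M.γ 1 k t ω = true then 1 else min (h m k t ω) (M.g 1 k t ω) + 1)

/-- Expected AoI of CP `k` at eRRH `n` at time `t`. -/
noncomputable def Eg (n k : Fin 2) (t : ℕ) : ℝ := ∫ ω, (M.g n k t ω : ℝ) ∂M.μ

/-- Expected AoI of CP `k` at user `m` at time `t`. -/
noncomputable def Eh (m k : Fin 2) (t : ℕ) : ℝ := ∫ ω, (M.h m k t ω : ℝ) ∂M.μ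

/-- Total request rate of a user for CP `k`: `b_k = b_k^{(1)} + b_k^{(2)}`. -/
def bk (k : Fin 2) : ℝ := M.bsplit k 0 + M.bsplit k 1

/-- `ζ_{nk} = 1 - (1 - b_k^{(n)})^2`. -/
def ζ (n k : Fin 2) : ℝ := 1 - (1 - M.bsplit k n) ^ 2

end ObliviousFRAN

namespace ObliviousFRAN

variable (M : ObliviousFRAN)

/-- The family of primitive random variables. -/
def F : ∀ i : FranIdx, M.Ω → FranType i :=
  fun i => Sum.rec (motive := fun j => M.Ω → FranType j)
    (fun p => M.R p.1 p.2.1 p.2.2) (fun p => M.γ p.1 p.2.1 p.2.2) i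

lemma F_meas : ∀ i, Measurable (M.F i)
  | .inl p => M.R_meas p.1 p.2.1 p.2.2
  | .inr p => M.γ_meas p.1 p.2.1 p.2.2

lemma indep' : ProbabilityTheory.iIndepFun (m := fun i => FranType.instMeasurableSpace i) M.F M.μ :=
  M.indep

/-- time of an index -/
def idxT : FranIdx → ℕ
  | .inl p => p.2.2
  | .inr p => p.2.2

/-- block of all indices whose time lies in `s` -/
def blk (s : Finset ℕ) : Finset FranIdx :=
  ((Finset.univ ×ˢ Finset.univ ×ˢ s).image Sum.inl) ∪
    ((Finset.univ ×ˢ Finset.univ ×ˢ s).image Sum.inr)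

lemma mem_blk {s : Finset ℕ} {i : FranIdx} : i ∈ blk s ↔ idxT i ∈ s := by
  cases i with
  | inl p =>
      simp only [blk, idxT, Finset.mem_union, Finset.mem_image, Finset.mem_product,
        Finset.mem_univ, true_and, Sum.inl.injEq, Sum.inr.injEq, reduceCtorEq,
        exists_eq_right, Prod.exists, Prod.mk.injEq, or_false, false_or, exists_and_left]
      simp
  | inr p =>
      simp only [blk, idxT, Finset.mem_union, Finset.mem_image, Finset.mem_product,
        Finset.mem_univ, true_and, Sum.inl.injEq, Sum.inr.injEq, reduceCtorEq,
        exists_eq_right, Prod.exists, Prod.mk.injEq, or_false, false_or, exists_and_left]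
      simp

/-- the σ-algebra generated by the primitive variables indexed by `S` -/
def σA (S : Finset FranIdx) : MeasurableSpace M.Ω :=
  MeasurableSpace.comap (fun ω (i : S) => M.F i ω) MeasurableSpace.pi

lemma σA_le (S : Finset FranIdx) : M.σA S ≤ M.mΩ :=
  Measurable.comap_le (measurable_pi_lambda _ (fun i => M.F_meas i))

lemma measurable_restrict (S : Finset FranIdx) :
    Measurable[M.σA S] (fun ω (i : S) => M.F i ω) :=
  Measurable.of_comap_le le_rfl

lemma F_meas_σA {S : Finset FranIdx} {i : FranIdx} (hi : i ∈ S) :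
    Measurable[M.σA S] (M.F i) :=
  (measurable_pi_apply (⟨i, hi⟩ : S)).comp (M.measurable_restrict S)

lemma σA_mono {S T : Finset FranIdx} (hST : S ⊆ T) : M.σA S ≤ M.σA T := by
  have hproj : Measurable (fun (gg : ∀ i : T, FranType i) (i : S) => gg ⟨i.1, hST i.2⟩) :=
    measurable_pi_lambda _ (fun i => measurable_pi_apply _)
  have heq : (fun ω (i : S) => M.F i ω)
      = (fun gg (i : S) => gg ⟨i.1, hST i.2⟩) ∘ (fun ω (i : T) => M.F i ω) := rfl
  rw [σA, σA, heq, ← MeasurableSpace.comap_comp]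
  exact MeasurableSpace.comap_mono hproj.comap_le

lemma R_meas_σA (m k : Fin 2) (t : ℕ) {s : Finset ℕ} (ht : t ∈ s) :
    Measurable[M.σA (blk s)] (M.R m k t) :=
  M.F_meas_σA (i := .inl (m, k, t)) (mem_blk.2 ht)

lemma γ_meas_σA (n k : Fin 2) (t : ℕ) {s : Finset ℕ} (ht : t ∈ s) :
    Measurable[M.σA (blk s)] (M.γ n k t) :=
  M.F_meas_σA (i := .inr (n, k, t)) (mem_blk.2 ht)

lemma σA_range_mono {t t' : ℕ} (h : t ≤ t') :
    M.σA (blk (Finset.range t)) ≤ M.σA (blk (Finset.range t')) := by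
  refine M.σA_mono (fun i hi => ?_)
  rw [mem_blk] at hi ⊢
  simp only [Finset.mem_range] at hi ⊢
  omega

/-- any function into a countable discrete space composed with a measurable one -/
private lemma meas_comp' {α β γ' : Type*} {mα : MeasurableSpace α} [MeasurableSpace β]
    [Countable β] [MeasurableSingletonClass β] [MeasurableSpace γ']
    {f : α → β} (hf : Measurable f) (φ : β → γ') : Measurable (fun a => φ (f a)) :=
  (measurable_of_countable φ).comp hf

lemma g_meas_σA (n k : Fin 2) (t : ℕ) :
    Measurable[M.σA (blk (Finset.range t))] (M.g n k t) := by
  induction t with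
  | zero => exact measurable_const
  | succ t ih =>
      have hle : M.σA (blk (Finset.range t)) ≤ M.σA (blk (Finset.range (t + 1))) :=
        M.σA_range_mono (Nat.le_succ t)
      have hg : Measurable[M.σA (blk (Finset.range (t + 1)))] (M.g n k t) :=
        ih.mono hle le_rfl
      have hγ : Measurable[M.σA (blk (Finset.range (t + 1)))] (M.γ n k t) :=
        M.γ_meas_σA n k t (by simp)
      have hR : ∀ m, Measurable[M.σA (blk (Finset.range (t + 1)))] (M.R m k t) :=
        fun m => M.R_meas_σA m k t (by simp)
      have hset : MeasurableSet[M.σA (blk (Finset.range (t + 1)))]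
          {ω | M.γ n k t ω = true ∧ ∃ m : Fin 2, M.R m k t ω = n.succ} := by
        have : {ω | M.γ n k t ω = true ∧ ∃ m : Fin 2, M.R m k t ω = n.succ}
            = (M.γ n k t ⁻¹' {true}) ∩ (⋃ m : Fin 2, M.R m k t ⁻¹' {n.succ}) := by
          ext ω; simp
        rw [this]
        exact (hγ (measurableSet_singleton _)).inter
          (MeasurableSet.iUnion fun m => hR m (measurableSet_singleton _))
      show Measurable[M.σA (blk (Finset.range (t + 1)))] (fun ω =>
        if M.γ n k t ω = true ∧ ∃ m : Fin 2, M.R m k t ω = n.succ then 1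
        else M.g n k t ω + 1)
      exact Measurable.ite hset measurable_const (meas_comp' hg (· + 1))

lemma h_meas_σA (m k : Fin 2) (t : ℕ) :
    Measurable[M.σA (blk (Finset.range t))] (M.h m k t) := by
  induction t with
  | zero => exact measurable_const
  | succ t ih =>
      have hle : M.σA (blk (Finset.range t)) ≤ M.σA (blk (Finset.range (t + 1))) :=
        M.σA_range_mono (Nat.le_succ t)
      have hh : Measurable[M.σA (blk (Finset.range (t + 1)))] (M.h m k t) :=
        ih.mono hle le_rfl
      have hg : ∀ n, Measurable[M.σA (blk (Finset.range (t + 1)))] (M.g n k t) :=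
        fun n => (M.g_meas_σA n k t).mono hle le_rfl
      have hγ : ∀ n, Measurable[M.σA (blk (Finset.range (t + 1)))] (M.γ n k t) :=
        fun n => M.γ_meas_σA n k t (by simp)
      have hR : Measurable[M.σA (blk (Finset.range (t + 1)))] (M.R m k t) :=
        M.R_meas_σA m k t (by simp)
      have hmin : ∀ n, Measurable[M.σA (blk (Finset.range (t + 1)))]
          (fun ω => min (M.h m k t ω) (M.g n k t ω) + 1) := by
        intro n
        exact meas_comp' (Measurable.prodMk hh (hg n)) (fun p => min p.1 p.2 + 1)
      show Measurable[M.σA (blk (Finset.range (t + 1)))] (fun ω =>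
        if M.R m k t ω = 0 then M.h m k t ω + 1
        else if M.R m k t ω = 1 then
          (if M.γ 0 k t ω = true then 1 else min (M.h m k t ω) (M.g 0 k t ω) + 1)
        else
          (if M.γ 1 k t ω = true then 1 else min (M.h m k t ω) (M.g 1 k t ω) + 1))
      refine Measurable.ite (hR (measurableSet_singleton _)) (meas_comp' hh (· + 1)) ?_
      refine Measurable.ite (hR (measurableSet_singleton _)) ?_ ?_
      · exact Measurable.ite ((hγ 0) (measurableSet_singleton _)) measurable_const (hmin 0)
      · exact Measurable.ite ((hγ 1) (measurableSet_singleton _)) measurable_const (hmin 1)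

lemma g_meas (n k : Fin 2) (t : ℕ) : Measurable (M.g n k t) :=
  (M.g_meas_σA n k t).mono (M.σA_le _) le_rfl

lemma h_meas (m k : Fin 2) (t : ℕ) : Measurable (M.h m k t) :=
  (M.h_meas_σA m k t).mono (M.σA_le _) le_rfl

lemma g_le (n k : Fin 2) (t : ℕ) : ∀ ω, M.g n k t ω ≤ t + 1 := by
  induction t with
  | zero => intro ω; exact le_rfl
  | succ t ih =>
      intro ω
      show (if M.γ n k t ω = true ∧ ∃ m : Fin 2, M.R m k t ω = n.succ then 1
        else M.g n k t ω + 1) ≤ t + 2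
      split
      · omega
      · have := ih ω; omega

lemma h_le (m k : Fin 2) (t : ℕ) : ∀ ω, M.h m k t ω ≤ t + 1 := by
  induction t with
  | zero => intro ω; exact le_rfl
  | succ t ih =>
      intro ω
      show (if M.R m k t ω = 0 then M.h m k t ω + 1
        else if M.R m k t ω = 1 then
          (if M.γ 0 k t ω = true then 1 else min (M.h m k t ω) (M.g 0 k t ω) + 1)
        else
          (if M.γ 1 k t ω = true then 1 else min (M.h m k t ω) (M.g 1 k t ω) + 1)) ≤ t + 2
      have := ih ω
      have h0 := min_le_left (M.h m k t ω) (M.g 0 k t ω)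
      have h1 := min_le_left (M.h m k t ω) (M.g 1 k t ω)
      split
      · omega
      · split
        · split <;> omega
        · split <;> omega

lemma integrable_cast {X : M.Ω → ℕ} (hX : Measurable X) (C : ℕ) (hC : ∀ ω, X ω ≤ C) :
    Integrable (fun ω => (X ω : ℝ)) M.μ := by
  have := M.isProb
  refine (integrable_const (C : ℝ)).mono' ?_ (Filter.Eventually.of_forall fun ω => ?_)
  · exact (meas_comp' hX (fun n : ℕ => (n : ℝ))).aestronglyMeasurable
  · rw [Real.norm_natCast]
    exact_mod_cast hC ω

lemma integrable_g (n k : Fin 2) (t : ℕ) : Integrable (fun ω => (M.g n k t ω : ℝ)) M.μ :=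
  M.integrable_cast (M.g_meas n k t) (t + 1) (M.g_le n k t)

lemma integrable_h (m k : Fin 2) (t : ℕ) : Integrable (fun ω => (M.h m k t ω : ℝ)) M.μ :=
  M.integrable_cast (M.h_meas m k t) (t + 1) (M.h_le m k t)

/-- Key independence lemma: the expectation of (indicator of a time-`t` event) times
(a function of the past) factorizes. -/
lemma indep_key (t : ℕ) {A : Set M.Ω} (hA : MeasurableSet[M.σA (blk {t})] A)
    {X : M.Ω → ℕ} (hX : Measurable[M.σA (blk (Finset.range t))] X) :
    ∫ ω, A.indicator (fun _ => (1 : ℝ)) ω * (X ω : ℝ) ∂M.μ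
      = (M.μ A).toReal * ∫ ω, (X ω : ℝ) ∂M.μ := by
  have hdisj : Disjoint (blk ({t} : Finset ℕ)) (blk (Finset.range t)) := by
    rw [Finset.disjoint_left]
    intro i hi hi'
    rw [mem_blk] at hi hi'
    simp only [Finset.mem_singleton] at hi
    simp only [Finset.mem_range] at hi'
    omega
  have hIF := iIndepFun.indepFun_finset _ _ hdisj M.indep' M.F_meas
  have hind : Indep (M.σA (blk {t})) (M.σA (blk (Finset.range t))) M.μ :=
    (IndepFun_iff_Indep _ _ _).mp hIF
  have hχ : Measurable[M.σA (blk {t})] (A.indicator (fun _ => (1 : ℝ))) :=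
    measurable_const.indicator hA
  have hXr : Measurable[M.σA (blk (Finset.range t))] (fun ω => (X ω : ℝ)) :=
    meas_comp' hX (fun n : ℕ => (n : ℝ))
  have hIndepFun : IndepFun (A.indicator fun _ => (1 : ℝ)) (fun ω => (X ω : ℝ)) M.μ := by
    rw [IndepFun_iff_Indep]
    exact indep_of_indep_of_le_right (indep_of_indep_of_le_left hind hχ.comap_le) hXr.comap_le
  have h1 : AEStronglyMeasurable (A.indicator fun _ => (1 : ℝ)) M.μ :=
    (hχ.mono (M.σA_le _) le_rfl).aestronglyMeasurable
  have h2 : AEStronglyMeasurable (fun ω => (X ω : ℝ)) M.μ :=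
    (hXr.mono (M.σA_le _) le_rfl).aestronglyMeasurable
  have hAfull : MeasurableSet A := (M.σA_le _) A hA
  rw [hIndepFun.integral_fun_mul_eq_mul_integral h1 h2]
  congr 1
  exact MeasureTheory.integral_indicator_one hAfull

lemma bk_nonneg (k : Fin 2) : 0 ≤ M.bk k :=
  add_nonneg (M.bsplit_nonneg k 0) (M.bsplit_nonneg k 1)

lemma bk_le_one (k : Fin 2) : M.bk k ≤ 1 := M.bsum_le_one k

lemma bsplit_le_one (k n : Fin 2) : M.bsplit k n ≤ 1 := by
  have h0 := M.bsplit_nonneg k 0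
  have h1 := M.bsplit_nonneg k 1
  have hs := M.bsum_le_one k
  rcases n with ⟨nv, hnv⟩
  interval_cases nv
  · have hn : (⟨0, hnv⟩ : Fin 2) = 0 := rfl
    rw [hn]; linarith
  · have hn : (⟨1, hnv⟩ : Fin 2) = 1 := rfl
    rw [hn]; linarith

lemma ζ_nonneg (n k : Fin 2) : 0 ≤ M.ζ n k := by
  have h0 := M.bsplit_nonneg k n
  have h1 := M.bsplit_le_one k n
  rw [ζ]; nlinarith

lemma ζ_le_one (n k : Fin 2) : M.ζ n k ≤ 1 := by
  rw [ζ]; nlinarith [sq_nonneg (1 - M.bsplit k n)]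

lemma rζ_le_one (n k : Fin 2) : M.r k * M.ζ n k ≤ 1 :=
  mul_le_one₀ (M.r_le_one k) (M.ζ_nonneg n k) (M.ζ_le_one n k)

lemma rζ_nonneg (n k : Fin 2) : 0 ≤ M.r k * M.ζ n k :=
  mul_nonneg (M.r_nonneg k) (M.ζ_nonneg n k)

lemma bkr_le_one (k : Fin 2) : M.bk k * M.r k ≤ 1 :=
  mul_le_one₀ (M.bk_le_one k) (M.r_nonneg k) (M.r_le_one k)

lemma bkr_nonneg (k : Fin 2) : 0 ≤ M.bk k * M.r k :=
  mul_nonneg (M.bk_nonneg k) (M.r_nonneg k)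

/-- selector sets: `{v}` at request indices, `{bv}` at command indices -/
def sel (v : Fin 3) (bv : Bool) : ∀ i : FranIdx, Set (FranType i)
  | .inl _ => {v}
  | .inr _ => {bv}

lemma meas_prod_sel (S : Finset FranIdx) (sel' : ∀ i : FranIdx, Set (FranType i)) :
    M.μ (⋂ i ∈ S, M.F i ⁻¹' sel' i) = ∏ i ∈ S, M.μ (M.F i ⁻¹' sel' i) := by
  refine M.indep'.meas_biInter (fun i _ => ⟨sel' i, ?_, rfl⟩)
  cases i <;> exact MeasurableSpace.measurableSet_top

lemma meas_γfalse (n k : Fin 2) (t : ℕ) :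
    M.μ {ω | M.γ n k t ω = false} = ENNReal.ofReal (1 - M.r k) := by
  have := M.isProb
  have hset : {ω | M.γ n k t ω = false} = {ω | M.γ n k t ω = true}ᶜ := by
    ext ω; simp
  rw [hset, measure_compl
    (show MeasurableSet {ω | M.γ n k t ω = true} from
      M.γ_meas n k t (measurableSet_singleton true))
    (measure_ne_top _ _), M.γ_law, measure_univ,
    ENNReal.ofReal_sub _ (M.r_nonneg k), ENNReal.ofReal_one]

lemma meas_Rγ (m n k : Fin 2) (t : ℕ) (v : Fin 3) (bv : Bool) :
    M.μ ({ω | M.R m k t ω = v} ∩ {ω | M.γ n k t ω = bv})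
      = M.μ {ω | M.R m k t ω = v} * M.μ {ω | M.γ n k t ω = bv} := by
  have h := M.meas_prod_sel {Sum.inl (m, k, t), Sum.inr (n, k, t)} (sel v bv)
  have hne : (Sum.inl (m, k, t) : FranIdx) ∉ ({Sum.inr (n, k, t)} : Finset FranIdx) := by
    simp
  rw [Finset.set_biInter_insert, Finset.set_biInter_singleton,
    Finset.prod_insert hne, Finset.prod_singleton] at h
  exact h

lemma meas_γRR (n k : Fin 2) (t : ℕ) (v : Fin 3) :
    M.μ ({ω | M.γ n k t ω = true} ∩ ({ω | M.R 0 k t ω = v} ∩ {ω | M.R 1 k t ω = v}))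
      = M.μ {ω | M.γ n k t ω = true}
        * (M.μ {ω | M.R 0 k t ω = v} * M.μ {ω | M.R 1 k t ω = v}) := by
  have h := M.meas_prod_sel
    {Sum.inr (n, k, t), Sum.inl ((0 : Fin 2), k, t), Sum.inl ((1 : Fin 2), k, t)} (sel v true)
  have hne1 : (Sum.inr (n, k, t) : FranIdx)
      ∉ ({Sum.inl ((0 : Fin 2), k, t), Sum.inl ((1 : Fin 2), k, t)} : Finset FranIdx) := by simp
  have hne2 : (Sum.inl ((0 : Fin 2), k, t) : FranIdx)
      ∉ ({Sum.inl ((1 : Fin 2), k, t)} : Finset FranIdx) := by simp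
  rw [Finset.set_biInter_insert, Finset.set_biInter_insert, Finset.set_biInter_singleton,
    Finset.prod_insert hne1, Finset.prod_insert hne2, Finset.prod_singleton] at h
  exact h

lemma integrable_ind_mul {S : Set M.Ω} (hS : MeasurableSet S) {X : M.Ω → ℕ}
    (hX : Measurable X) (C : ℕ) (hC : ∀ ω, X ω ≤ C) :
    Integrable (fun ω => S.indicator (fun _ => (1 : ℝ)) ω * (X ω : ℝ)) M.μ := by
  have := M.isProb
  refine (integrable_const (C : ℝ)).mono' ?_ (Filter.Eventually.of_forall fun ω => ?_)
  · exact ((measurable_const.indicator hS).mul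
      (meas_comp' hX (fun i : ℕ => (i : ℝ)))).aestronglyMeasurable
  · rw [Real.norm_eq_abs, abs_mul]
    have h1 : |S.indicator (fun _ => (1 : ℝ)) ω| ≤ 1 := by
      by_cases hω : ω ∈ S <;> simp [Set.indicator_apply, hω]
    have h2 : |(X ω : ℝ)| = (X ω : ℝ) := abs_of_nonneg (Nat.cast_nonneg _)
    have h3 : (X ω : ℝ) ≤ C := Nat.cast_le.mpr (hC ω)
    nlinarith [abs_nonneg (S.indicator (fun _ => (1 : ℝ)) ω),
      (show (0 : ℝ) ≤ (X ω : ℝ) from Nat.cast_nonneg _)]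

lemma Eg_zero (n k : Fin 2) : M.Eg n k 0 = 1 := by
  have := M.isProb
  simp [Eg, g, MeasureTheory.integral_const]

lemma Eh_zero (m k : Fin 2) : M.Eh m k 0 = 1 := by
  have := M.isProb
  simp [Eh, h, MeasureTheory.integral_const]

lemma Eg_succ (n k : Fin 2) (t : ℕ) :
    M.Eg n k (t + 1) = 1 + (1 - M.r k * M.ζ n k) * M.Eg n k t := by
  have hprob := M.isProb
  set A : Set M.Ω := {ω | M.γ n k t ω = true} ∩ {ω | M.R 0 k t ω = n.succ} with hAdef
  set B : Set M.Ω := {ω | M.γ n k t ω = true} ∩ {ω | M.R 1 k t ω = n.succ} with hBdef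
  set Cs : Set M.Ω := {ω | M.γ n k t ω = true}
      ∩ ({ω | M.R 0 k t ω = n.succ} ∩ {ω | M.R 1 k t ω = n.succ}) with hCdef
  have hγm : Measurable[M.σA (blk {t})] (M.γ n k t) :=
    M.γ_meas_σA n k t (Finset.mem_singleton_self t)
  have hRm : ∀ m', Measurable[M.σA (blk {t})] (M.R m' k t) :=
    fun m' => M.R_meas_σA m' k t (Finset.mem_singleton_self t)
  have hAms : MeasurableSet[M.σA (blk {t})] A :=
    (hγm (measurableSet_singleton true)).inter (hRm 0 (measurableSet_singleton _))
  have hBms : MeasurableSet[M.σA (blk {t})] B :=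
    (hγm (measurableSet_singleton true)).inter (hRm 1 (measurableSet_singleton _))
  have hCms : MeasurableSet[M.σA (blk {t})] Cs :=
    (hγm (measurableSet_singleton true)).inter
      ((hRm 0 (measurableSet_singleton _)).inter (hRm 1 (measurableSet_singleton _)))
  have hpt : ∀ ω, (M.g n k (t + 1) ω : ℝ)
      = 1 + (M.g n k t ω : ℝ)
        - A.indicator (fun _ => (1 : ℝ)) ω * (M.g n k t ω : ℝ)
        - B.indicator (fun _ => (1 : ℝ)) ω * (M.g n k t ω : ℝ)
        + Cs.indicator (fun _ => (1 : ℝ)) ω * (M.g n k t ω : ℝ) := by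
    intro ω
    have hg1 : M.g n k (t + 1) ω
        = if M.γ n k t ω = true ∧ ∃ m : Fin 2, M.R m k t ω = n.succ then 1
          else M.g n k t ω + 1 := rfl
    by_cases hγ : M.γ n k t ω = true <;>
      by_cases h0 : M.R 0 k t ω = n.succ <;>
        by_cases h1 : M.R 1 k t ω = n.succ <;>
          · simp only [hg1, hAdef, hBdef, hCdef, Set.indicator_apply, Set.mem_inter_iff,
              Set.mem_setOf_eq, hγ, h0, h1, Fin.exists_fin_two, true_and, and_true, false_and,
              and_false, if_true, if_false, or_true, true_or, or_false, false_or,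
              not_true, not_false_iff, ite_true, ite_false, and_self]
            push_cast
            ring
  have iG := M.integrable_g n k t
  have hAfull : MeasurableSet A := M.σA_le _ A hAms
  have hBfull : MeasurableSet B := M.σA_le _ B hBms
  have hCfull : MeasurableSet Cs := M.σA_le _ Cs hCms
  have ia := M.integrable_ind_mul hAfull (M.g_meas n k t) (t + 1) (M.g_le n k t)
  have ib := M.integrable_ind_mul hBfull (M.g_meas n k t) (t + 1) (M.g_le n k t)
  have ic := M.integrable_ind_mul hCfull (M.g_meas n k t) (t + 1) (M.g_le n k t)
  have kA := M.indep_key t hAms (M.g_meas_σA n k t)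
  have kB := M.indep_key t hBms (M.g_meas_σA n k t)
  have kC := M.indep_key t hCms (M.g_meas_σA n k t)
  have I1 : Integrable (fun ω => 1 + (M.g n k t ω : ℝ)) M.μ := (integrable_const 1).add iG
  have I2 : Integrable (fun ω => 1 + (M.g n k t ω : ℝ)
      - A.indicator (fun _ => (1 : ℝ)) ω * (M.g n k t ω : ℝ)) M.μ := I1.sub ia
  have I3 : Integrable (fun ω => 1 + (M.g n k t ω : ℝ)
      - A.indicator (fun _ => (1 : ℝ)) ω * (M.g n k t ω : ℝ)
      - B.indicator (fun _ => (1 : ℝ)) ω * (M.g n k t ω : ℝ)) M.μ := I2.sub ib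
  have pA : (M.μ A).toReal = M.r k * M.bsplit k n := by
    rw [hAdef, Set.inter_comm, M.meas_Rγ 0 n k t n.succ true, M.R_law, M.γ_law,
      ← ENNReal.ofReal_mul (M.bsplit_nonneg k n),
      ENNReal.toReal_ofReal (mul_nonneg (M.bsplit_nonneg k n) (M.r_nonneg k)), mul_comm]
  have pB : (M.μ B).toReal = M.r k * M.bsplit k n := by
    rw [hBdef, Set.inter_comm, M.meas_Rγ 1 n k t n.succ true, M.R_law, M.γ_law,
      ← ENNReal.ofReal_mul (M.bsplit_nonneg k n),
      ENNReal.toReal_ofReal (mul_nonneg (M.bsplit_nonneg k n) (M.r_nonneg k)), mul_comm]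
  have pC : (M.μ Cs).toReal = M.r k * (M.bsplit k n * M.bsplit k n) := by
    rw [hCdef, M.meas_γRR n k t n.succ, M.γ_law, M.R_law, M.R_law,
      ← ENNReal.ofReal_mul (M.bsplit_nonneg k n),
      ← ENNReal.ofReal_mul (M.r_nonneg k),
      ENNReal.toReal_ofReal (mul_nonneg (M.r_nonneg k)
        (mul_nonneg (M.bsplit_nonneg k n) (M.bsplit_nonneg k n)))]
  simp only [Eg]
  rw [integral_congr_ae (Filter.Eventually.of_forall hpt),
    integral_add I3 ic, integral_sub I2 ib, integral_sub I1 ia,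
    integral_add (integrable_const 1) iG, integral_const, kA, kB, kC, pA, pB, pC]
  simp only [measure_univ, probReal_univ, ENNReal.toReal_one, smul_eq_mul, one_mul, mul_one]
  simp only [ζ]
  ring

lemma Eg_eq (n k : Fin 2) (t : ℕ) :
    M.Eg n k t = ∑ j ∈ Finset.range (t + 1), (1 - M.r k * M.ζ n k) ^ j := by
  induction t with
  | zero => simp [M.Eg_zero n k]
  | succ t ih =>
      rw [M.Eg_succ n k t, ih]
      conv_rhs => rw [geom_sum_succ]
      ring

lemma fin3_cases : ∀ x : Fin 3, x = 0 ∨ x = 1 ∨ x = 2 := by decide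

lemma Eh_succ_le1 (m k : Fin 2) (t : ℕ) :
    M.Eh m k (t + 1) ≤ 1 + (1 - M.bk k * M.r k) * M.Eh m k t := by
  have hprob := M.isProb
  set E1 : Set M.Ω := {ω | M.R m k t ω = (0 : Fin 2).succ} ∩ {ω | M.γ 0 k t ω = true} with h1def
  set E2 : Set M.Ω := {ω | M.R m k t ω = (1 : Fin 2).succ} ∩ {ω | M.γ 1 k t ω = true} with h2def
  have hRmm : Measurable[M.σA (blk {t})] (M.R m k t) :=
    M.R_meas_σA m k t (Finset.mem_singleton_self t)
  have hγm : ∀ n', Measurable[M.σA (blk {t})] (M.γ n' k t) :=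
    fun n' => M.γ_meas_σA n' k t (Finset.mem_singleton_self t)
  have hE1ms : MeasurableSet[M.σA (blk {t})] E1 :=
    (hRmm (measurableSet_singleton _)).inter ((hγm 0) (measurableSet_singleton true))
  have hE2ms : MeasurableSet[M.σA (blk {t})] E2 :=
    (hRmm (measurableSet_singleton _)).inter ((hγm 1) (measurableSet_singleton true))
  have hs0 : ((0 : Fin 2).succ : Fin 3) = 1 := rfl
  have hs1 : ((1 : Fin 2).succ : Fin 3) = 2 := rfl
  have hpt : ∀ ω, (M.h m k (t + 1) ω : ℝ)
      ≤ 1 + (M.h m k t ω : ℝ)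
        - E1.indicator (fun _ => (1 : ℝ)) ω * (M.h m k t ω : ℝ)
        - E2.indicator (fun _ => (1 : ℝ)) ω * (M.h m k t ω : ℝ) := by
    intro ω
    have hh1 : M.h m k (t + 1) ω
        = if M.R m k t ω = 0 then M.h m k t ω + 1
          else if M.R m k t ω = 1 then
            (if M.γ 0 k t ω = true then 1 else min (M.h m k t ω) (M.g 0 k t ω) + 1)
          else
            (if M.γ 1 k t ω = true then 1 else min (M.h m k t ω) (M.g 1 k t ω) + 1) := rfl
    rcases fin3_cases (M.R m k t ω) with hR | hR | hR
    · have c1 : ω ∉ E1 := fun hm =>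
        (by decide : ((0 : Fin 2).succ : Fin 3) ≠ 0) (hm.1.symm.trans hR)
      have c2 : ω ∉ E2 := fun hm =>
        (by decide : ((1 : Fin 2).succ : Fin 3) ≠ 0) (hm.1.symm.trans hR)
      rw [hh1, if_pos hR, Set.indicator_of_notMem c1, Set.indicator_of_notMem c2]
      push_cast
      linarith
    · have c2 : ω ∉ E2 := fun hm =>
        (by decide : ((1 : Fin 2).succ : Fin 3) ≠ 1) (hm.1.symm.trans hR)
      rw [hh1, if_neg (by rw [hR]; decide), if_pos hR, Set.indicator_of_notMem c2]
      by_cases hγ0 : M.γ 0 k t ω = true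
      · have c1 : ω ∈ E1 := ⟨hR.trans hs0.symm, hγ0⟩
        rw [if_pos hγ0, Set.indicator_of_mem c1]
        have : (0 : ℝ) ≤ (M.h m k t ω : ℝ) := Nat.cast_nonneg _
        push_cast
        linarith
      · have c1 : ω ∉ E1 := fun hm => hγ0 hm.2
        rw [if_neg hγ0, Set.indicator_of_notMem c1]
        have hmin : ((min (M.h m k t ω) (M.g 0 k t ω) : ℕ) : ℝ) ≤ (M.h m k t ω : ℝ) :=
          Nat.cast_le.mpr (min_le_left _ _)
        push_cast
        push_cast at hmin
        linarith
    · have c1 : ω ∉ E1 := fun hm =>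
        (by decide : ((0 : Fin 2).succ : Fin 3) ≠ 2) (hm.1.symm.trans hR)
      rw [hh1, if_neg (by rw [hR]; decide), if_neg (by rw [hR]; decide),
        Set.indicator_of_notMem c1]
      by_cases hγ1 : M.γ 1 k t ω = true
      · have c2 : ω ∈ E2 := ⟨hR.trans hs1.symm, hγ1⟩
        rw [if_pos hγ1, Set.indicator_of_mem c2]
        have : (0 : ℝ) ≤ (M.h m k t ω : ℝ) := Nat.cast_nonneg _
        push_cast
        linarith
      · have c2 : ω ∉ E2 := fun hm => hγ1 hm.2
        rw [if_neg hγ1, Set.indicator_of_notMem c2]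
        have hmin : ((min (M.h m k t ω) (M.g 1 k t ω) : ℕ) : ℝ) ≤ (M.h m k t ω : ℝ) :=
          Nat.cast_le.mpr (min_le_left _ _)
        push_cast
        push_cast at hmin
        linarith
  have iH := M.integrable_h m k t
  have hE1full : MeasurableSet E1 := M.σA_le _ E1 hE1ms
  have hE2full : MeasurableSet E2 := M.σA_le _ E2 hE2ms
  have i1 := M.integrable_ind_mul hE1full (M.h_meas m k t) (t + 1) (M.h_le m k t)
  have i2 := M.integrable_ind_mul hE2full (M.h_meas m k t) (t + 1) (M.h_le m k t)
  have k1 := M.indep_key t hE1ms (M.h_meas_σA m k t)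
  have k2 := M.indep_key t hE2ms (M.h_meas_σA m k t)
  have I1 : Integrable (fun ω => 1 + (M.h m k t ω : ℝ)) M.μ := (integrable_const 1).add iH
  have I2 : Integrable (fun ω => 1 + (M.h m k t ω : ℝ)
      - E1.indicator (fun _ => (1 : ℝ)) ω * (M.h m k t ω : ℝ)) M.μ := I1.sub i1
  have I3 : Integrable (fun ω => 1 + (M.h m k t ω : ℝ)
      - E1.indicator (fun _ => (1 : ℝ)) ω * (M.h m k t ω : ℝ)
      - E2.indicator (fun _ => (1 : ℝ)) ω * (M.h m k t ω : ℝ)) M.μ := I2.sub i2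
  have p1 : (M.μ E1).toReal = M.bsplit k 0 * M.r k := by
    rw [h1def, M.meas_Rγ m 0 k t (0 : Fin 2).succ true, M.R_law, M.γ_law,
      ← ENNReal.ofReal_mul (M.bsplit_nonneg k 0),
      ENNReal.toReal_ofReal (mul_nonneg (M.bsplit_nonneg k 0) (M.r_nonneg k))]
  have p2 : (M.μ E2).toReal = M.bsplit k 1 * M.r k := by
    rw [h2def, M.meas_Rγ m 1 k t (1 : Fin 2).succ true, M.R_law, M.γ_law,
      ← ENNReal.ofReal_mul (M.bsplit_nonneg k 1),
      ENNReal.toReal_ofReal (mul_nonneg (M.bsplit_nonneg k 1) (M.r_nonneg k))]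
  have big := integral_mono (M.integrable_h m k (t + 1)) I3 hpt
  rw [integral_sub I2 i2, integral_sub I1 i1, integral_add (integrable_const 1) iH,
    integral_const, k1, k2, p1, p2] at big
  simp only [measure_univ, probReal_univ, ENNReal.toReal_one, smul_eq_mul, one_mul, mul_one] at big
  simp only [Eh] at big ⊢
  have heq : 1 + (1 - M.bk k * M.r k) * ∫ ω, (M.h m k t ω : ℝ) ∂M.μ
      = 1 + (∫ ω, (M.h m k t ω : ℝ) ∂M.μ)
        - M.bsplit k 0 * M.r k * ∫ ω, (M.h m k t ω : ℝ) ∂M.μ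
        - M.bsplit k 1 * M.r k * ∫ ω, (M.h m k t ω : ℝ) ∂M.μ := by
    rw [bk]; ring
  rw [heq]
  exact big

lemma Eh_le_sum (m k : Fin 2) (t : ℕ) :
    M.Eh m k t ≤ ∑ j ∈ Finset.range (t + 1), (1 - M.bk k * M.r k) ^ j := by
  induction t with
  | zero => simp [M.Eh_zero m k]
  | succ t ih =>
      have h1 : 0 ≤ 1 - M.bk k * M.r k := by linarith [M.bkr_le_one k]
      have h2 := mul_le_mul_of_nonneg_left ih h1
      calc M.Eh m k (t + 1) ≤ 1 + (1 - M.bk k * M.r k) * M.Eh m k t := M.Eh_succ_le1 m k t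
        _ ≤ 1 + (1 - M.bk k * M.r k) * ∑ j ∈ Finset.range (t + 1), (1 - M.bk k * M.r k) ^ j := by
            linarith
        _ = ∑ j ∈ Finset.range (t + 1 + 1), (1 - M.bk k * M.r k) ^ j := by
            conv_rhs => rw [geom_sum_succ]
            ring

lemma Eh_succ_le2 (m k : Fin 2) (t : ℕ) :
    M.Eh m k (t + 1) ≤ 1 + (1 - M.bk k) * M.Eh m k t
      + M.bsplit k 0 * (1 - M.r k) * M.Eg 0 k t
      + M.bsplit k 1 * (1 - M.r k) * M.Eg 1 k t := by
  have hprob := M.isProb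
  set E0 : Set M.Ω := {ω | M.R m k t ω = 0} with h0def
  set Ea : Set M.Ω := {ω | M.R m k t ω = (0 : Fin 2).succ} ∩ {ω | M.γ 0 k t ω = false} with hadef
  set Eb : Set M.Ω := {ω | M.R m k t ω = (1 : Fin 2).succ} ∩ {ω | M.γ 1 k t ω = false} with hbdef
  have hRmm : Measurable[M.σA (blk {t})] (M.R m k t) :=
    M.R_meas_σA m k t (Finset.mem_singleton_self t)
  have hγm : ∀ n', Measurable[M.σA (blk {t})] (M.γ n' k t) :=
    fun n' => M.γ_meas_σA n' k t (Finset.mem_singleton_self t)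
  have hE0ms : MeasurableSet[M.σA (blk {t})] E0 := hRmm (measurableSet_singleton _)
  have hEams : MeasurableSet[M.σA (blk {t})] Ea :=
    (hRmm (measurableSet_singleton _)).inter ((hγm 0) (measurableSet_singleton false))
  have hEbms : MeasurableSet[M.σA (blk {t})] Eb :=
    (hRmm (measurableSet_singleton _)).inter ((hγm 1) (measurableSet_singleton false))
  have hs0 : ((0 : Fin 2).succ : Fin 3) = 1 := rfl
  have hs1 : ((1 : Fin 2).succ : Fin 3) = 2 := rfl
  have hpt : ∀ ω, (M.h m k (t + 1) ω : ℝ)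
      ≤ 1 + E0.indicator (fun _ => (1 : ℝ)) ω * (M.h m k t ω : ℝ)
        + Ea.indicator (fun _ => (1 : ℝ)) ω * (M.g 0 k t ω : ℝ)
        + Eb.indicator (fun _ => (1 : ℝ)) ω * (M.g 1 k t ω : ℝ) := by
    intro ω
    have hh1 : M.h m k (t + 1) ω
        = if M.R m k t ω = 0 then M.h m k t ω + 1
          else if M.R m k t ω = 1 then
            (if M.γ 0 k t ω = true then 1 else min (M.h m k t ω) (M.g 0 k t ω) + 1)
          else
            (if M.γ 1 k t ω = true then 1 else min (M.h m k t ω) (M.g 1 k t ω) + 1) := rfl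
    have hga : (0 : ℝ) ≤ (M.g 0 k t ω : ℝ) := Nat.cast_nonneg _
    have hgb : (0 : ℝ) ≤ (M.g 1 k t ω : ℝ) := Nat.cast_nonneg _
    have hhn : (0 : ℝ) ≤ (M.h m k t ω : ℝ) := Nat.cast_nonneg _
    rcases fin3_cases (M.R m k t ω) with hR | hR | hR
    · have c0 : ω ∈ E0 := hR
      have ca : ω ∉ Ea := fun hm =>
        (by decide : ((0 : Fin 2).succ : Fin 3) ≠ 0) (hm.1.symm.trans hR)
      have cb : ω ∉ Eb := fun hm =>
        (by decide : ((1 : Fin 2).succ : Fin 3) ≠ 0) (hm.1.symm.trans hR)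
      rw [hh1, if_pos hR, Set.indicator_of_mem c0, Set.indicator_of_notMem ca,
        Set.indicator_of_notMem cb]
      push_cast
      linarith
    · have c0 : ω ∉ E0 := by rw [h0def, Set.mem_setOf_eq, hR]; decide
      have cb : ω ∉ Eb := fun hm =>
        (by decide : ((1 : Fin 2).succ : Fin 3) ≠ 1) (hm.1.symm.trans hR)
      rw [hh1, if_neg (by rw [hR]; decide), if_pos hR, Set.indicator_of_notMem c0,
        Set.indicator_of_notMem cb]
      by_cases hγ0 : M.γ 0 k t ω = true
      · have ca : ω ∉ Ea := fun hm => by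
          have h2' : M.γ 0 k t ω = false := hm.2
          rw [h2'] at hγ0
          exact Bool.false_ne_true hγ0
        rw [if_pos hγ0, Set.indicator_of_notMem ca]
        push_cast
        linarith
      · have ca : ω ∈ Ea := ⟨hR.trans hs0.symm, Bool.eq_false_iff.mpr hγ0⟩
        rw [if_neg hγ0, Set.indicator_of_mem ca]
        have hmin : ((min (M.h m k t ω) (M.g 0 k t ω) : ℕ) : ℝ) ≤ (M.g 0 k t ω : ℝ) :=
          Nat.cast_le.mpr (min_le_right _ _)
        push_cast
        push_cast at hmin
        linarith
    · have c0 : ω ∉ E0 := by rw [h0def, Set.mem_setOf_eq, hR]; decide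
      have ca : ω ∉ Ea := fun hm =>
        (by decide : ((0 : Fin 2).succ : Fin 3) ≠ 2) (hm.1.symm.trans hR)
      rw [hh1, if_neg (by rw [hR]; decide), if_neg (by rw [hR]; decide),
        Set.indicator_of_notMem c0, Set.indicator_of_notMem ca]
      by_cases hγ1 : M.γ 1 k t ω = true
      · have cb : ω ∉ Eb := fun hm => by
          have h2' : M.γ 1 k t ω = false := hm.2
          rw [h2'] at hγ1
          exact Bool.false_ne_true hγ1
        rw [if_pos hγ1, Set.indicator_of_notMem cb]
        push_cast
        linarith
      · have cb : ω ∈ Eb := ⟨hR.trans hs1.symm, Bool.eq_false_iff.mpr hγ1⟩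
        rw [if_neg hγ1, Set.indicator_of_mem cb]
        have hmin : ((min (M.h m k t ω) (M.g 1 k t ω) : ℕ) : ℝ) ≤ (M.g 1 k t ω : ℝ) :=
          Nat.cast_le.mpr (min_le_right _ _)
        push_cast
        push_cast at hmin
        linarith
  have iH := M.integrable_h m k t
  have hE0full : MeasurableSet E0 := M.σA_le _ E0 hE0ms
  have hEafull : MeasurableSet Ea := M.σA_le _ Ea hEams
  have hEbfull : MeasurableSet Eb := M.σA_le _ Eb hEbms
  have i0 := M.integrable_ind_mul hE0full (M.h_meas m k t) (t + 1) (M.h_le m k t)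
  have ia := M.integrable_ind_mul hEafull (M.g_meas 0 k t) (t + 1) (M.g_le 0 k t)
  have ib := M.integrable_ind_mul hEbfull (M.g_meas 1 k t) (t + 1) (M.g_le 1 k t)
  have k0 := M.indep_key t hE0ms (M.h_meas_σA m k t)
  have ka := M.indep_key t hEams (M.g_meas_σA 0 k t)
  have kb := M.indep_key t hEbms (M.g_meas_σA 1 k t)
  have I1 : Integrable (fun ω => 1
      + E0.indicator (fun _ => (1 : ℝ)) ω * (M.h m k t ω : ℝ)) M.μ := (integrable_const 1).add i0
  have I2 : Integrable (fun ω => 1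
      + E0.indicator (fun _ => (1 : ℝ)) ω * (M.h m k t ω : ℝ)
      + Ea.indicator (fun _ => (1 : ℝ)) ω * (M.g 0 k t ω : ℝ)) M.μ := I1.add ia
  have I3 : Integrable (fun ω => 1
      + E0.indicator (fun _ => (1 : ℝ)) ω * (M.h m k t ω : ℝ)
      + Ea.indicator (fun _ => (1 : ℝ)) ω * (M.g 0 k t ω : ℝ)
      + Eb.indicator (fun _ => (1 : ℝ)) ω * (M.g 1 k t ω : ℝ)) M.μ := I2.add ib
  have p0 : (M.μ E0).toReal = 1 - M.bk k := by
    rw [h0def, M.R_law0, ENNReal.toReal_ofReal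
      (by have := M.bk_le_one k; rw [bk] at this; linarith)]
    rfl
  have pa : (M.μ Ea).toReal = M.bsplit k 0 * (1 - M.r k) := by
    rw [hadef, M.meas_Rγ m 0 k t (0 : Fin 2).succ false, M.R_law, M.meas_γfalse,
      ← ENNReal.ofReal_mul (M.bsplit_nonneg k 0),
      ENNReal.toReal_ofReal (mul_nonneg (M.bsplit_nonneg k 0) (by linarith [M.r_le_one k]))]
  have pb : (M.μ Eb).toReal = M.bsplit k 1 * (1 - M.r k) := by
    rw [hbdef, M.meas_Rγ m 1 k t (1 : Fin 2).succ false, M.R_law, M.meas_γfalse,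
      ← ENNReal.ofReal_mul (M.bsplit_nonneg k 1),
      ENNReal.toReal_ofReal (mul_nonneg (M.bsplit_nonneg k 1) (by linarith [M.r_le_one k]))]
  have big := integral_mono (M.integrable_h m k (t + 1)) I3 hpt
  rw [integral_add I2 ib, integral_add I1 ia, integral_add (integrable_const 1) i0,
    integral_const, k0, ka, kb, p0, pa, pb] at big
  simp only [measure_univ, probReal_univ, ENNReal.toReal_one, smul_eq_mul, one_mul, mul_one] at big
  simp only [Eh, Eg] at big ⊢
  linarith

end ObliviousFRAN

/-- the second recursive upper bound on `E[h_{mk}(t+1)]`. -/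
theorem stmt3 (M : ObliviousFRAN) (m k : Fin 2) (t : ℕ) :
    M.Eh m k (t + 1) ≤
      1 + (1 - M.bk k) * ∑ j ∈ Finset.range (t + 1), (1 - M.bk k * M.r k) ^ j
        + ∑ n : Fin 2, M.bsplit k n * (1 - M.r k) *
            ∑ j ∈ Finset.range (t + 1), (1 - M.r k * M.ζ n k) ^ j := by
  have h1 : 0 ≤ 1 - M.bk k := by linarith [M.bk_le_one k]
  have h2 := M.Eh_succ_le2 m k t
  have h3 := M.Eh_le_sum m k t
  have h4 := M.Eg_eq 0 k t
  have h5 := M.Eg_eq 1 k t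
  have h6 := mul_le_mul_of_nonneg_left h3 h1
  rw [Fin.sum_univ_two]
  rw [h4, h5] at h2
  linarith
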